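/- Let X be the solution of the recursive distributional equation X =_d √U·X + √U·(1−√U). Then for every real ε > 0 and every integer k ≥ 1, P(X ≥ 1 − ε) ≤ 2^{k(k+3)/4}·ε^{k/2}. -/
import Mathlib


open MeasureTheory

noncomputable section

/-- The uniform distribution on `[0,1]`. -/
def unif : Measure ℝ := volume.restrict (Set.Icc 0 1)

/-- The map `(x, u) ↦ √u·x + √u·(1 − √u)`. -/
def rdeMap (q : ℝ × ℝ) : ℝ :=
  Real.sqrt q.2 * q.1 + Real.sqrt q.2 * (1 - Real.sqrt q.2)

/-- `μ` is a (probability) solution of the recursive distributional equation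
`X =_d √U·X + √U·(1 − √U)` with `X, U` independent and `U` uniform on `[0,1]`. -/
def IsRDESolution (μ : Measure ℝ) : Prop :=
  IsProbabilityMeasure μ ∧ Measure.map rdeMap (μ.prod unif) = μ

lemma rdeMap_measurable : Measurable rdeMap := by
  have : Continuous rdeMap := by unfold rdeMap; fun_prop
  exact this.measurable

instance : IsProbabilityMeasure unif := ⟨by simp [unif, Real.volume_Icc]⟩

lemma unif_Ici (a : ℝ) (h0 : 0 ≤ a) (h1 : a ≤ 1) :
    unif (Set.Ici a) = ENNReal.ofReal (1 - a) := by
  rw [unif, Measure.restrict_apply measurableSet_Ici]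
  have : Set.Ici a ∩ Set.Icc 0 1 = Set.Icc a 1 := by
    ext y; simp only [Set.mem_inter_iff, Set.mem_Ici, Set.mem_Icc]
    constructor
    · rintro ⟨h, _, h2⟩; exact ⟨h, h2⟩
    · rintro ⟨h, h2⟩; exact ⟨h, le_trans h0 h, h2⟩
  rw [this, Real.volume_Icc]

lemma unif_Ioi (a : ℝ) (h0 : 0 ≤ a) (h1 : a ≤ 1) :
    unif (Set.Ioi a) = ENNReal.ofReal (1 - a) := by
  rw [unif, Measure.restrict_apply measurableSet_Ioi]
  have : Set.Ioi a ∩ Set.Icc 0 1 = Set.Ioc a 1 := by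
    ext y; simp only [Set.mem_inter_iff, Set.mem_Ioi, Set.mem_Icc, Set.mem_Ioc]
    constructor
    · rintro ⟨h, _, h2⟩; exact ⟨h, h2⟩
    · rintro ⟨h, h2⟩; exact ⟨h, le_trans h0 h.le, h2⟩
  rw [this, Real.volume_Ioc]

lemma map_eq (μ : Measure ℝ) (hμ : IsRDESolution μ) (s : Set ℝ) (hs : MeasurableSet s) :
    μ s = (μ.prod unif) (rdeMap ⁻¹' s) := by
  conv_lhs => rw [← hμ.2]
  exact Measure.map_apply rdeMap_measurable hs

lemma prod_unif_restrict (μ : Measure ℝ) [SFinite μ] (A : Set (ℝ × ℝ)) (hA : MeasurableSet A) :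
    (μ.prod unif) A = (μ.prod unif) (A ∩ Set.univ ×ˢ Set.Icc 0 1) := by
  have h : μ.prod unif = (μ.prod volume).restrict (Set.univ ×ˢ Set.Icc 0 1) := by
    conv_lhs => rw [← Measure.restrict_univ (μ := μ)]
    rw [unif, Measure.prod_restrict]
  rw [h, Measure.restrict_apply hA,
    Measure.restrict_apply (hA.inter (MeasurableSet.univ.prod measurableSet_Icc)),
    Set.inter_assoc, Set.inter_self]

lemma doubling (μ : Measure ℝ) (hμ : IsRDESolution μ) (t : ℝ) (ht : 1 ≤ t) :
    μ (Set.Ioc t (2 * t)) = 0 := by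
  haveI := hμ.1
  have hsplit : μ (Set.Ioi t) = μ (Set.Ioc t (2 * t)) + μ (Set.Ioi (2 * t)) := by
    rw [← measure_union (Set.Ioc_disjoint_Ioi le_rfl) measurableSet_Ioi,
      Set.Ioc_union_Ioi_eq_Ioi (by linarith)]
  have key : μ (Set.Ioi t)
      ≤ μ (Set.Ioc t (2 * t)) * ENNReal.ofReal (8 / 9) + μ (Set.Ioi (2 * t)) := by
    rw [map_eq μ hμ _ measurableSet_Ioi,
      prod_unif_restrict μ _ (rdeMap_measurable measurableSet_Ioi)]
    have hsub : rdeMap ⁻¹' Set.Ioi t ∩ Set.univ ×ˢ Set.Icc 0 1 ⊆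
        (Set.Ioc t (2 * t)) ×ˢ (Set.Ioi (1 / 9 : ℝ)) ∪ (Set.Ioi (2 * t)) ×ˢ (Set.univ : Set ℝ) := by
      rintro ⟨x, u⟩ ⟨hmem, -, hu0, hu1⟩
      simp only [Set.mem_preimage, Set.mem_Ioi, rdeMap] at hmem
      set s := Real.sqrt u with hs
      have hs0 : 0 ≤ s := Real.sqrt_nonneg u
      have hs1 : s ≤ 1 := Real.sqrt_le_one.mpr hu1
      have hss : s * s = u := Real.mul_self_sqrt hu0
      by_cases hx : 2 * t < x
      · exact Or.inr ⟨hx, trivial⟩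
      · push_neg at hx
        left
        have hxt : t < x := by nlinarith [mul_nonneg hs0 (sub_nonneg.mpr hs1)]
        have hu9 : (1 / 9 : ℝ) < u := by nlinarith
        exact ⟨⟨hxt, hx⟩, hu9⟩
    calc (μ.prod unif) (rdeMap ⁻¹' Set.Ioi t ∩ Set.univ ×ˢ Set.Icc 0 1)
        ≤ (μ.prod unif) ((Set.Ioc t (2 * t)) ×ˢ (Set.Ioi (1 / 9 : ℝ))
            ∪ (Set.Ioi (2 * t)) ×ˢ (Set.univ : Set ℝ)) := measure_mono hsub
      _ ≤ (μ.prod unif) ((Set.Ioc t (2 * t)) ×ˢ (Set.Ioi (1 / 9 : ℝ)))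
            + (μ.prod unif) ((Set.Ioi (2 * t)) ×ˢ (Set.univ : Set ℝ)) := measure_union_le _ _
      _ = μ (Set.Ioc t (2 * t)) * ENNReal.ofReal (8 / 9) + μ (Set.Ioi (2 * t)) := by
          rw [Measure.prod_prod, Measure.prod_prod, unif_Ioi (1/9) (by norm_num) (by norm_num)]
          norm_num
  rw [hsplit] at key
  have hb : μ (Set.Ioi (2 * t)) ≠ ⊤ := measure_ne_top _ _
  have key2 : μ (Set.Ioc t (2 * t)) ≤ μ (Set.Ioc t (2 * t)) * ENNReal.ofReal (8 / 9) :=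
    (WithTop.add_le_add_iff_right hb).mp key
  have ha : μ (Set.Ioc t (2 * t)) ≠ ⊤ := measure_ne_top _ _
  have := ENNReal.toReal_mono (by finiteness) key2
  rw [ENNReal.toReal_mul, ENNReal.toReal_ofReal (by norm_num)] at this
  have h0 : (μ (Set.Ioc t (2 * t))).toReal = 0 := by
    nlinarith [ENNReal.toReal_nonneg (a := μ (Set.Ioc t (2 * t)))]
  exact (ENNReal.toReal_eq_zero_iff _).mp h0 |>.resolve_right ha

lemma tail_zero (μ : Measure ℝ) (hμ : IsRDESolution μ) : μ (Set.Ioi (1 : ℝ)) = 0 := by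
  haveI := hμ.1
  have hsplit : ∀ t : ℝ, 1 ≤ t → μ (Set.Ioi t) = μ (Set.Ioc t (2 * t)) + μ (Set.Ioi (2 * t)) := by
    intro t ht
    rw [← measure_union (Set.Ioc_disjoint_Ioi le_rfl) measurableSet_Ioi,
      Set.Ioc_union_Ioi_eq_Ioi (by linarith)]
  have hdd : ∀ t : ℝ, 1 ≤ t → μ (Set.Ioi t) = μ (Set.Ioi (2 * t)) := by
    intro t ht
    rw [hsplit t ht, doubling μ hμ t ht, zero_add]
  have hpow : ∀ n : ℕ, μ (Set.Ioi (1 : ℝ)) = μ (Set.Ioi ((2 : ℝ) ^ n)) := by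
    intro n
    induction n with
    | zero => simp
    | succ n ih =>
        rw [ih, pow_succ, mul_comm]
        exact hdd _ (one_le_pow₀ (one_le_two : (1:ℝ) ≤ 2))
  have hIoc : ∀ n : ℕ, μ (Set.Ioc (1 : ℝ) (2 ^ n)) = 0 := by
    intro n
    have h2n : (1 : ℝ) ≤ 2 ^ n := one_le_pow₀ (one_le_two : (1:ℝ) ≤ 2)
    have h1 : μ (Set.Ioc (1 : ℝ) (2 ^ n)) + μ (Set.Ioi ((2 : ℝ) ^ n)) = μ (Set.Ioi ((2:ℝ) ^ n)) := by
      rw [← measure_union (Set.Ioc_disjoint_Ioi le_rfl) measurableSet_Ioi,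
        Set.Ioc_union_Ioi_eq_Ioi h2n, hpow n]
    have hb : μ (Set.Ioi ((2 : ℝ) ^ n)) ≠ ⊤ := measure_ne_top _ _
    nth_rewrite 2 [← zero_add (μ (Set.Ioi ((2:ℝ) ^ n)))] at h1
    exact WithTop.add_right_cancel hb h1
  have hcover : Set.Ioi (1 : ℝ) ⊆ ⋃ n : ℕ, Set.Ioc (1 : ℝ) (2 ^ n) := by
    intro x hx
    obtain ⟨n, hn⟩ := pow_unbounded_of_one_lt x (one_lt_two : (1 : ℝ) < 2)
    exact Set.mem_iUnion.2 ⟨n, hx, hn.le⟩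
  exact measure_mono_null hcover (measure_iUnion_null fun n => hIoc n)

lemma rde_step (μ : Measure ℝ) (hμ : IsRDESolution μ) (ε : ℝ) (h1 : 0 < ε) (h2 : ε < 1 / 4) :
    μ (Set.Ici (1 - ε)) ≤ μ (Set.Ici (1 - 2 * ε)) * ENNReal.ofReal (2 * Real.sqrt ε) := by
  haveI := hμ.1
  have hse : Real.sqrt ε < 1 / 2 := by
    rw [show (1:ℝ)/2 = Real.sqrt (1/4) by
      rw [show (1:ℝ)/4 = (1/2)^2 by norm_num, Real.sqrt_sq (by norm_num)]]
    exact Real.sqrt_lt_sqrt h1.le h2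
  have hse0 : 0 ≤ Real.sqrt ε := Real.sqrt_nonneg ε
  have hse2 : Real.sqrt ε * Real.sqrt ε = ε := Real.mul_self_sqrt h1.le
  set a : ℝ := (1 - Real.sqrt ε) ^ 2 with ha
  have ha0 : 0 ≤ a := sq_nonneg _
  have ha1 : a ≤ 1 := by nlinarith
  rw [map_eq μ hμ _ measurableSet_Ici,
    prod_unif_restrict μ _ (rdeMap_measurable measurableSet_Ici)]
  have hsub : rdeMap ⁻¹' Set.Ici (1 - ε) ∩ Set.univ ×ˢ Set.Icc 0 1 ⊆
      (Set.Ici (1 - 2 * ε)) ×ˢ (Set.Ici a) ∪ (Set.Ioi (1 : ℝ)) ×ˢ (Set.univ : Set ℝ) := by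
    rintro ⟨x, u⟩ ⟨hmem, -, hu0, hu1⟩
    simp only [Set.mem_preimage, Set.mem_Ici, rdeMap] at hmem
    set s := Real.sqrt u with hs
    have hs0 : 0 ≤ s := Real.sqrt_nonneg u
    have hs1 : s ≤ 1 := Real.sqrt_le_one.mpr hu1
    have hss : s * s = u := Real.mul_self_sqrt hu0
    by_cases hx : 1 < x
    · exact Or.inr ⟨hx, trivial⟩
    · push_neg at hx
      left
      have hid : (1 - s) ^ 2 + s * (1 - x) ≤ ε := by nlinarith
      have h1s : (1 - s) ^ 2 ≤ ε := by nlinarith [mul_nonneg hs0 (sub_nonneg.mpr hx)]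
      have h1s' : 1 - s ≤ Real.sqrt ε := by
        have h := Real.sqrt_le_sqrt h1s
        rw [Real.sqrt_sq_eq_abs] at h
        exact le_trans (le_abs_self _) h
      have hshalf : 1 / 2 < s := by linarith
      refine ⟨?_, ?_⟩
      · show 1 - 2 * ε ≤ x
        nlinarith [mul_nonneg hs0 (sub_nonneg.mpr hx)]
      · show a ≤ u
        rw [ha, ← hss]
        nlinarith
  calc (μ.prod unif) (rdeMap ⁻¹' Set.Ici (1 - ε) ∩ Set.univ ×ˢ Set.Icc 0 1)
      ≤ (μ.prod unif) ((Set.Ici (1 - 2 * ε)) ×ˢ (Set.Ici a)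
          ∪ (Set.Ioi (1 : ℝ)) ×ˢ (Set.univ : Set ℝ)) := measure_mono hsub
    _ ≤ (μ.prod unif) ((Set.Ici (1 - 2 * ε)) ×ˢ (Set.Ici a))
          + (μ.prod unif) ((Set.Ioi (1 : ℝ)) ×ˢ (Set.univ : Set ℝ)) := measure_union_le _ _
    _ = μ (Set.Ici (1 - 2 * ε)) * unif (Set.Ici a) := by
        rw [Measure.prod_prod, Measure.prod_prod, tail_zero μ hμ, zero_mul, add_zero]
    _ ≤ μ (Set.Ici (1 - 2 * ε)) * ENNReal.ofReal (2 * Real.sqrt ε) := by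
        rw [unif_Ici a ha0 ha1]
        refine mul_le_mul_right (ENNReal.ofReal_le_ofReal ?_) _
        nlinarith

lemma main_aux (μ : Measure ℝ) (hμ : IsRDESolution μ) (k : ℕ) : ∀ ε : ℝ, 0 < ε →
    (μ (Set.Ici (1 - ε))).toReal ≤ (2 : ℝ) ^ (((k : ℝ) * ((k : ℝ) + 3)) / 4) * ε ^ ((k : ℝ) / 2) := by
  haveI := hμ.1
  induction k with
  | zero =>
      intro ε hε
      simp only [Nat.cast_zero, zero_mul, zero_div, Real.rpow_zero, one_mul]
      calc (μ (Set.Ici (1 - ε))).toReal ≤ (μ Set.univ).toReal :=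
            ENNReal.toReal_mono (by finiteness) (measure_mono (Set.subset_univ _))
        _ = 1 := by simp
  | succ k ih =>
      intro ε hε
      have hc : ((k : ℝ) + 1) = ((k + 1 : ℕ) : ℝ) := by push_cast; ring
      rw [← hc]
      set c : ℝ := (k : ℝ) with hcc
      have hc0 : 0 ≤ c := Nat.cast_nonneg k
      by_cases hsmall : ε < 1 / 4
      · have h2e : (0 : ℝ) < 2 * ε := by linarith
        have ihh := ih (2 * ε) h2e
        have hstep := rde_step μ hμ ε hε hsmall
        have hP : (μ (Set.Ici (1 - ε))).toReal
            ≤ (μ (Set.Ici (1 - 2 * ε))).toReal * (2 * Real.sqrt ε) := by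
          have := ENNReal.toReal_mono (by finiteness) hstep
          rwa [ENNReal.toReal_mul, ENNReal.toReal_ofReal
            (by positivity : (0:ℝ) ≤ 2 * Real.sqrt ε)] at this
        have hQ : (μ (Set.Ici (1 - 2 * ε))).toReal * (2 * Real.sqrt ε)
            ≤ ((2 : ℝ) ^ ((c * (c + 3)) / 4) * (2 * ε) ^ (c / 2)) * (2 * Real.sqrt ε) := by
          apply mul_le_mul_of_nonneg_right ihh (by positivity)
        have hsqrt : Real.sqrt ε = ε ^ ((1 : ℝ) / 2) := Real.sqrt_eq_rpow ε
        have halg : ((2 : ℝ) ^ ((c * (c + 3)) / 4) * (2 * ε) ^ (c / 2)) * (2 * Real.sqrt ε)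
            = (2 : ℝ) ^ (((c + 1) * ((c + 1) + 3)) / 4) * ε ^ ((c + 1) / 2) := by
          rw [hsqrt, Real.mul_rpow (by norm_num) hε.le]
          rw [show (2:ℝ) ^ ((c * (c+3))/4) * ((2:ℝ) ^ (c/2) * ε ^ (c/2)) * (2 * ε ^ ((1:ℝ)/2))
              = ((2:ℝ) ^ ((c * (c+3))/4) * (2:ℝ) ^ (c/2) * (2:ℝ)^(1:ℝ))
                * (ε ^ (c/2) * ε ^ ((1:ℝ)/2)) by rw [Real.rpow_one]; ring]
          rw [← Real.rpow_add two_pos, ← Real.rpow_add two_pos, ← Real.rpow_add hε]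
          ring_nf
        calc (μ (Set.Ici (1 - ε))).toReal
            ≤ (μ (Set.Ici (1 - 2 * ε))).toReal * (2 * Real.sqrt ε) := hP
          _ ≤ ((2 : ℝ) ^ ((c * (c + 3)) / 4) * (2 * ε) ^ (c / 2)) * (2 * Real.sqrt ε) := hQ
          _ = (2 : ℝ) ^ (((c + 1) * ((c + 1) + 3)) / 4) * ε ^ ((c + 1) / 2) := halg
      · push_neg at hsmall
        have hP1 : (μ (Set.Ici (1 - ε))).toReal ≤ 1 := by
          calc (μ (Set.Ici (1 - ε))).toReal ≤ (μ Set.univ).toReal :=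
              ENNReal.toReal_mono (by finiteness) (measure_mono (Set.subset_univ _))
            _ = 1 := by simp
        refine le_trans hP1 ?_
        have h14 : ((1:ℝ)/4) ^ ((c + 1) / 2) ≤ ε ^ ((c + 1) / 2) :=
          Real.rpow_le_rpow (by norm_num) hsmall (by positivity)
        have h14' : ((1:ℝ)/4) ^ ((c + 1) / 2) = (2:ℝ) ^ (-(c + 1)) := by
          rw [show ((1:ℝ)/4) = (2:ℝ) ^ (-2 : ℝ) by
            rw [Real.rpow_neg (by norm_num), show ((2:ℝ))^(2:ℝ) = 4 by
              rw [show (2:ℝ) = ((2:ℕ):ℝ) by norm_num, Real.rpow_natCast]; norm_num]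
            norm_num]
          rw [← Real.rpow_mul (by norm_num)]
          ring_nf
        have key : (1:ℝ) ≤ (2:ℝ) ^ (((c + 1) * ((c + 1) + 3)) / 4) * (2:ℝ) ^ (-(c + 1)) := by
          rw [← Real.rpow_add two_pos]
          calc (1:ℝ) = (2:ℝ) ^ (0:ℝ) := (Real.rpow_zero 2).symm
            _ ≤ _ := Real.rpow_le_rpow_of_exponent_le one_le_two (by nlinarith)
        calc (1:ℝ) ≤ (2:ℝ) ^ (((c + 1) * ((c + 1) + 3)) / 4) * (2:ℝ) ^ (-(c + 1)) := key
          _ = (2:ℝ) ^ (((c + 1) * ((c + 1) + 3)) / 4) * ((1:ℝ)/4) ^ ((c + 1) / 2) := by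
              rw [h14']
          _ ≤ (2:ℝ) ^ (((c + 1) * ((c + 1) + 3)) / 4) * ε ^ ((c + 1) / 2) := by
              exact mul_le_mul_of_nonneg_left h14 (by positivity)

/-- Tail bound for the solution `X` of the RDE `X =_d √U·X + √U·(1 − √U)`: for every
`ε > 0` and every integer `k ≥ 1`, `P(X ≥ 1 − ε) ≤ 2^{k(k+3)/4}·ε^{k/2}`. -/
theorem rde_tail_bound (μ : Measure ℝ) (hμ : IsRDESolution μ)
    (ε : ℝ) (hε : 0 < ε) (k : ℕ) (hk : 1 ≤ k) :
    (μ (Set.Ici (1 - ε))).toReal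
      ≤ (2 : ℝ) ^ (((k : ℝ) * ((k : ℝ) + 3)) / 4) * ε ^ ((k : ℝ) / 2) := by
  exact main_aux μ hμ k ε hε
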